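/- Let α_1,…,α_m ≥ 0, κ ∈ (0,1], and ρ ≤ 1 with ρ ≠ 0, and let u_CES : ℝᵐ → ℝ ∪ {−∞} be the CES utility function defined by u_CES(y) = (Σ_{j=1}^m α_j y_j^ρ)^{κ/ρ} if y ≥ 0 componentwise and u_CES(y) = −∞ otherwise (with the conventions 1/0 = ∞ and 1/∞ = 0, so that for ρ < 0 the value is 0 whenever some y_j = 0 with α_j > 0). Then u_CES is concave, i.e., u_CES(λy + (1−λ)z) ≥ λ u_CES(y) + (1−λ) u_CES(z) for all y, z ∈ ℝᵐ and λ ∈ (0,1). -/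

import Mathlib

open Finset Real

noncomputable def cesS {m : ℕ} (α : Fin m → ℝ) (ρ : ℝ) (y : Fin m → ℝ) : ℝ :=
  ∑ j, α j * (y j) ^ ρ

lemma cesS_nonneg {m : ℕ} {α : Fin m → ℝ} (hα : ∀ j, 0 ≤ α j) {ρ : ℝ} {y : Fin m → ℝ}
    (hy : ∀ j, 0 ≤ y j) : 0 ≤ cesS α ρ y :=
  Finset.sum_nonneg fun j _ => mul_nonneg (hα j) (Real.rpow_nonneg (hy j) _)

lemma cesS_pos {m : ℕ} {α : Fin m → ℝ} (hα : ∀ j, 0 ≤ α j) {ρ : ℝ} {y : Fin m → ℝ}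
    (hy : ∀ j, 0 ≤ y j) {j₀ : Fin m} (hj : α j₀ ≠ 0) (hyj : 0 < y j₀) : 0 < cesS α ρ y :=
  Finset.sum_pos' (fun j _ => mul_nonneg (hα j) (Real.rpow_nonneg (hy j) _))
    ⟨j₀, Finset.mem_univ _, mul_pos ((hα j₀).lt_of_ne (Ne.symm hj)) (Real.rpow_pos_of_pos hyj ρ)⟩

lemma cesS_smul {m : ℕ} {α : Fin m → ℝ} {ρ c : ℝ} {v : Fin m → ℝ} (hc : 0 ≤ c)
    (hv : ∀ j, 0 ≤ v j) : cesS α ρ (c • v) = c ^ ρ * cesS α ρ v := by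
  unfold cesS
  rw [Finset.mul_sum]
  refine Finset.sum_congr rfl fun j _ => ?_
  rw [Pi.smul_apply, smul_eq_mul, Real.mul_rpow hc (hv j)]
  ring

lemma kstep {κ : ℝ} (hκ0 : 0 < κ) (hκ1 : κ ≤ 1) {a b l : ℝ} (ha : 0 ≤ a) (hb : 0 ≤ b)
    (hl : 0 ≤ l) (hl1 : l ≤ 1) : l * a ^ κ + (1 - l) * b ^ κ ≤ (l * a + (1 - l) * b) ^ κ := by
  have h10 : (0:ℝ) ≤ 1 - l := by linarith
  have hab : l + (1 - l) = 1 := by ring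
  have := (Real.concaveOn_rpow hκ0.le hκ1).2 (Set.mem_Ici.2 ha) (Set.mem_Ici.2 hb) hl h10 hab
  simpa [smul_eq_mul] using this

lemma rpow_neg_convex {ρ : ℝ} (hρ : ρ < 0) {x y a b : ℝ} (hx : 0 < x) (hy : 0 < y)
    (ha : 0 ≤ a) (hb : 0 ≤ b) (hab : a + b = 1) :
    (a * x + b * y) ^ ρ ≤ a * x ^ ρ + b * y ^ ρ := by
  have h1 : 0 < a * x + b * y := by
    rcases lt_or_eq_of_le ha with h | h
    · nlinarith [mul_nonneg hb hy.le]
    · have hb1 : b = 1 := by linarith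
      rw [← h, hb1]; simpa using hy
  rw [Real.rpow_def_of_pos h1, Real.rpow_def_of_pos hx, Real.rpow_def_of_pos hy]
  have hlog : a * Real.log x + b * Real.log y ≤ Real.log (a * x + b * y) := by
    have := (strictConcaveOn_log_Ioi.concaveOn).2 (Set.mem_Ioi.2 hx) (Set.mem_Ioi.2 hy)
      ha hb hab
    simpa [smul_eq_mul] using this
  calc Real.exp (Real.log (a * x + b * y) * ρ)
      ≤ Real.exp (a * (Real.log x * ρ) + b * (Real.log y * ρ)) := by
        apply Real.exp_le_exp.2
        nlinarith [mul_le_mul_of_nonpos_right hlog hρ.le]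
    _ ≤ a * Real.exp (Real.log x * ρ) + b * Real.exp (Real.log y * ρ) := by
        have := convexOn_exp.2 (Set.mem_univ (Real.log x * ρ)) (Set.mem_univ (Real.log y * ρ))
          ha hb hab
        simpa [smul_eq_mul] using this

lemma lambda_alg {A B ρ : ℝ} (hA : 0 < A) (hB : 0 < B) :
    (A / (A + B)) ^ (1 - ρ) * A ^ ρ + (B / (A + B)) ^ (1 - ρ) * B ^ ρ = (A + B) ^ ρ := by
  have hC : 0 < A + B := by linarith
  have eA : A ^ (1 - ρ) * A ^ ρ = A := by
    rw [← Real.rpow_add hA]; norm_num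
  have eB : B ^ (1 - ρ) * B ^ ρ = B := by
    rw [← Real.rpow_add hB]; norm_num
  have eC : (A + B) / (A + B) ^ (1 - ρ) = (A + B) ^ ρ := by
    rw [div_eq_iff (Real.rpow_pos_of_pos hC _).ne', ← Real.rpow_add hC]
    norm_num
  rw [Real.div_rpow hA.le hC.le, Real.div_rpow hB.le hC.le]
  rw [div_mul_eq_mul_div, div_mul_eq_mul_div, eA, eB, ← add_div, eC]

lemma step_pos {ρ μ ν s t : ℝ} (hρ0 : 0 ≤ ρ) (hρ1 : ρ ≤ 1) (hμ : 0 < μ) (hν : 0 < ν)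
    (hμν : μ + ν = 1) (hs : 0 ≤ s) (ht : 0 ≤ t) :
    μ ^ (1 - ρ) * s ^ ρ + ν ^ (1 - ρ) * t ^ ρ ≤ (s + t) ^ ρ := by
  have h1 : s + t = μ * (s / μ) + ν * (t / ν) := by field_simp
  have h2 := (Real.concaveOn_rpow hρ0 hρ1).2 (Set.mem_Ici.2 (div_nonneg hs hμ.le))
    (Set.mem_Ici.2 (div_nonneg ht hν.le)) hμ.le hν.le hμν
  have e1 : μ * (s / μ) ^ ρ = μ ^ (1 - ρ) * s ^ ρ := by
    rw [Real.div_rpow hs hμ.le, Real.rpow_sub hμ, Real.rpow_one]; ring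
  have e2 : ν * (t / ν) ^ ρ = ν ^ (1 - ρ) * t ^ ρ := by
    rw [Real.div_rpow ht hν.le, Real.rpow_sub hν, Real.rpow_one]; ring
  calc μ ^ (1 - ρ) * s ^ ρ + ν ^ (1 - ρ) * t ^ ρ
      = μ * (s / μ) ^ ρ + ν * (t / ν) ^ ρ := by rw [e1, e2]
    _ ≤ (μ * (s / μ) + ν * (t / ν)) ^ ρ := by simpa [smul_eq_mul] using h2
    _ = (s + t) ^ ρ := by rw [← h1]

lemma step_neg {ρ μ ν s t : ℝ} (hρ : ρ < 0) (hμ : 0 < μ) (hν : 0 < ν)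
    (hμν : μ + ν = 1) (hs : 0 < s) (ht : 0 < t) :
    (s + t) ^ ρ ≤ μ ^ (1 - ρ) * s ^ ρ + ν ^ (1 - ρ) * t ^ ρ := by
  have h1 : s + t = μ * (s / μ) + ν * (t / ν) := by field_simp
  have h2 := rpow_neg_convex hρ (div_pos hs hμ) (div_pos ht hν) hμ.le hν.le hμν
  have e1 : μ * (s / μ) ^ ρ = μ ^ (1 - ρ) * s ^ ρ := by
    rw [Real.div_rpow hs.le hμ.le, Real.rpow_sub hμ, Real.rpow_one]; ring
  have e2 : ν * (t / ν) ^ ρ = ν ^ (1 - ρ) * t ^ ρ := by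
    rw [Real.div_rpow ht.le hν.le, Real.rpow_sub hν, Real.rpow_one]; ring
  calc (s + t) ^ ρ = (μ * (s / μ) + ν * (t / ν)) ^ ρ := by rw [← h1]
    _ ≤ μ * (s / μ) ^ ρ + ν * (t / ν) ^ ρ := h2
    _ = μ ^ (1 - ρ) * s ^ ρ + ν ^ (1 - ρ) * t ^ ρ := by rw [e1, e2]

lemma vec_pos {m : ℕ} {α : Fin m → ℝ} (hα : ∀ j, 0 ≤ α j) {ρ μ ν : ℝ} (hρ0 : 0 < ρ)
    (hρ1 : ρ ≤ 1) (hμ : 0 < μ) (hν : 0 < ν) (hμν : μ + ν = 1) {a b : Fin m → ℝ}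
    (ha : ∀ j, 0 ≤ a j) (hb : ∀ j, 0 ≤ b j) :
    μ ^ (1 - ρ) * cesS α ρ a + ν ^ (1 - ρ) * cesS α ρ b ≤ cesS α ρ (a + b) := by
  unfold cesS
  rw [Finset.mul_sum, Finset.mul_sum, ← Finset.sum_add_distrib]
  refine Finset.sum_le_sum fun j _ => ?_
  have h := mul_le_mul_of_nonneg_left
    (step_pos hρ0.le hρ1 hμ hν hμν (ha j) (hb j)) (hα j)
  have e : μ ^ (1 - ρ) * (α j * a j ^ ρ) + ν ^ (1 - ρ) * (α j * b j ^ ρ)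
      = α j * (μ ^ (1 - ρ) * a j ^ ρ + ν ^ (1 - ρ) * b j ^ ρ) := by ring
  rw [Pi.add_apply, e]
  exact h

lemma vec_neg {m : ℕ} {α : Fin m → ℝ} (hα : ∀ j, 0 ≤ α j) {ρ μ ν : ℝ} (hρ : ρ < 0)
    (hμ : 0 < μ) (hν : 0 < ν) (hμν : μ + ν = 1) {a b : Fin m → ℝ}
    (ha : ∀ j, α j ≠ 0 → 0 < a j) (hb : ∀ j, α j ≠ 0 → 0 < b j) :
    cesS α ρ (a + b) ≤ μ ^ (1 - ρ) * cesS α ρ a + ν ^ (1 - ρ) * cesS α ρ b := by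
  unfold cesS
  rw [Finset.mul_sum, Finset.mul_sum, ← Finset.sum_add_distrib]
  refine Finset.sum_le_sum fun j _ => ?_
  by_cases hαj : α j = 0
  · simp [hαj]
  have h := mul_le_mul_of_nonneg_left
    (step_neg hρ hμ hν hμν (ha j hαj) (hb j hαj)) (hα j)
  have e : μ ^ (1 - ρ) * (α j * a j ^ ρ) + ν ^ (1 - ρ) * (α j * b j ^ ρ)
      = α j * (μ ^ (1 - ρ) * a j ^ ρ + ν ^ (1 - ρ) * b j ^ ρ) := by ring
  rw [Pi.add_apply, e]
  exact h

lemma mono_pos {m : ℕ} {α : Fin m → ℝ} (hα : ∀ j, 0 ≤ α j) {ρ : ℝ} (hρ0 : 0 < ρ)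
    {v w : Fin m → ℝ} (hv : ∀ j, 0 ≤ v j) (h : ∀ j, v j ≤ w j) :
    cesS α ρ v ≤ cesS α ρ w :=
  Finset.sum_le_sum fun j _ =>
    mul_le_mul_of_nonneg_left (Real.rpow_le_rpow (hv j) (h j) hρ0.le) (hα j)

lemma main_pos {m : ℕ} {α : Fin m → ℝ} (hα : ∀ j, 0 ≤ α j) {ρ : ℝ} (hρ0 : 0 < ρ)
    (hρ1 : ρ ≤ 1) {y z : Fin m → ℝ} (hy : ∀ j, 0 ≤ y j) (hz : ∀ j, 0 ≤ z j)
    {l : ℝ} (hl : 0 < l) (hl1 : l < 1) :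
    l * (cesS α ρ y) ^ (1/ρ) + (1 - l) * (cesS α ρ z) ^ (1/ρ)
      ≤ (cesS α ρ (l • y + (1 - l) • z)) ^ (1/ρ) := by
  have hl1' : (0:ℝ) < 1 - l := by linarith
  set w := l • y + (1 - l) • z with hw
  have hwj : ∀ j, w j = l * y j + (1 - l) * z j := fun j => by
    simp [hw, Pi.add_apply, Pi.smul_apply, smul_eq_mul]
  have hw0 : ∀ j, 0 ≤ w j := fun j => by
    rw [hwj]
    exact add_nonneg (mul_nonneg hl.le (hy j)) (mul_nonneg hl1'.le (hz j))
  have hSy := cesS_nonneg hα hy (ρ := ρ)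
  have hSz := cesS_nonneg hα hz (ρ := ρ)
  have hSw := cesS_nonneg hα hw0 (ρ := ρ)
  set A := (cesS α ρ y) ^ (1/ρ) with hA
  set B := (cesS α ρ z) ^ (1/ρ) with hB
  have hA0 : 0 ≤ A := Real.rpow_nonneg hSy _
  have hB0 : 0 ≤ B := Real.rpow_nonneg hSz _
  have hAρ : A ^ ρ = cesS α ρ y := by
    rw [hA, ← Real.rpow_mul hSy, one_div, inv_mul_cancel₀ hρ0.ne', Real.rpow_one]
  have hBρ : B ^ ρ = cesS α ρ z := by
    rw [hB, ← Real.rpow_mul hSz, one_div, inv_mul_cancel₀ hρ0.ne', Real.rpow_one]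
  have key : (l * A + (1 - l) * B) ^ ρ ≤ cesS α ρ w := by
    rcases hA0.eq_or_lt with hA' | hApos
    · have e : (l * A + (1 - l) * B) ^ ρ = cesS α ρ ((1 - l) • z) := by
        rw [← hA', mul_zero, zero_add, Real.mul_rpow hl1'.le hB0, hBρ,
          cesS_smul hl1'.le hz]
      rw [e]
      refine mono_pos hα hρ0 (fun j => mul_nonneg hl1'.le (hz j)) fun j => ?_
      rw [hwj j]
      have : (0:ℝ) ≤ l * y j := mul_nonneg hl.le (hy j)
      simp only [Pi.smul_apply, smul_eq_mul]
      linarith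
    rcases hB0.eq_or_lt with hB' | hBpos
    · have e : (l * A + (1 - l) * B) ^ ρ = cesS α ρ (l • y) := by
        rw [← hB', mul_zero, add_zero, Real.mul_rpow hl.le hA0, hAρ, cesS_smul hl.le hy]
      rw [e]
      refine mono_pos hα hρ0 (fun j => mul_nonneg hl.le (hy j)) fun j => ?_
      rw [hwj j]
      have : (0:ℝ) ≤ (1 - l) * z j := mul_nonneg hl1'.le (hz j)
      simp only [Pi.smul_apply, smul_eq_mul]
      linarith
    · have hlA : 0 < l * A := mul_pos hl hApos
      have hlB : 0 < (1 - l) * B := mul_pos hl1' hBpos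
      have hC : 0 < l * A + (1 - l) * B := by linarith
      have hμν : l * A / (l * A + (1 - l) * B) + (1 - l) * B / (l * A + (1 - l) * B) = 1 := by
        field_simp
      have h := vec_pos hα hρ0 hρ1 (div_pos hlA hC) (div_pos hlB hC) hμν
        (a := l • y) (b := (1 - l) • z) (fun j => by
          simpa [smul_eq_mul] using mul_nonneg hl.le (hy j))
        (fun j => by simpa [smul_eq_mul] using mul_nonneg hl1'.le (hz j))
      rw [cesS_smul hl.le hy, cesS_smul hl1'.le hz, ← hAρ, ← hBρ,
        ← Real.mul_rpow hl.le hA0, ← Real.mul_rpow hl1'.le hB0] at h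
      calc (l * A + (1 - l) * B) ^ ρ
          = (l * A / (l * A + (1 - l) * B)) ^ (1 - ρ) * (l * A) ^ ρ
            + ((1 - l) * B / (l * A + (1 - l) * B)) ^ (1 - ρ) * ((1 - l) * B) ^ ρ :=
            (lambda_alg hlA hlB).symm
        _ ≤ cesS α ρ (l • y + (1 - l) • z) := h
  have hC0 : 0 ≤ l * A + (1 - l) * B :=
    add_nonneg (mul_nonneg hl.le hA0) (mul_nonneg hl1'.le hB0)
  calc l * A + (1 - l) * B
      = ((l * A + (1 - l) * B) ^ ρ) ^ (1/ρ) := by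
        rw [← Real.rpow_mul hC0, mul_one_div, div_self hρ0.ne', Real.rpow_one]
    _ ≤ (cesS α ρ w) ^ (1/ρ) :=
        Real.rpow_le_rpow (Real.rpow_nonneg hC0 ρ) key (by positivity)

lemma main_neg {m : ℕ} {α : Fin m → ℝ} (hα : ∀ j, 0 ≤ α j) {ρ : ℝ} (hρ : ρ < 0)
    {y z : Fin m → ℝ} (hy : ∀ j, 0 ≤ y j) (hz : ∀ j, 0 ≤ z j)
    (hy' : ∀ j, α j ≠ 0 → 0 < y j) (hz' : ∀ j, α j ≠ 0 → 0 < z j)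
    {j₀ : Fin m} (hj₀ : α j₀ ≠ 0) {l : ℝ} (hl : 0 < l) (hl1 : l < 1) :
    l * (cesS α ρ y) ^ (1/ρ) + (1 - l) * (cesS α ρ z) ^ (1/ρ)
      ≤ (cesS α ρ (l • y + (1 - l) • z)) ^ (1/ρ) := by
  have hl1' : (0:ℝ) < 1 - l := by linarith
  set w := l • y + (1 - l) • z with hw
  have hwj : ∀ j, w j = l * y j + (1 - l) * z j := fun j => by
    simp [hw, Pi.add_apply, Pi.smul_apply, smul_eq_mul]
  have hw0 : ∀ j, 0 ≤ w j := fun j => by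
    rw [hwj]
    exact add_nonneg (mul_nonneg hl.le (hy j)) (mul_nonneg hl1'.le (hz j))
  have hSy : 0 < cesS α ρ y := cesS_pos hα hy hj₀ (hy' j₀ hj₀)
  have hSz : 0 < cesS α ρ z := cesS_pos hα hz hj₀ (hz' j₀ hj₀)
  have hSw : 0 < cesS α ρ w := by
    refine cesS_pos hα hw0 hj₀ ?_
    rw [hwj]
    have := mul_pos hl (hy' j₀ hj₀)
    nlinarith [mul_nonneg hl1'.le (hz j₀)]
  set A := (cesS α ρ y) ^ (1/ρ) with hA
  set B := (cesS α ρ z) ^ (1/ρ) with hB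
  have hρne : ρ ≠ 0 := hρ.ne
  have hApos : 0 < A := Real.rpow_pos_of_pos hSy _
  have hBpos : 0 < B := Real.rpow_pos_of_pos hSz _
  have hAρ : A ^ ρ = cesS α ρ y := by
    rw [hA, ← Real.rpow_mul hSy.le, one_div, inv_mul_cancel₀ hρne, Real.rpow_one]
  have hBρ : B ^ ρ = cesS α ρ z := by
    rw [hB, ← Real.rpow_mul hSz.le, one_div, inv_mul_cancel₀ hρne, Real.rpow_one]
  have hlA : 0 < l * A := mul_pos hl hApos
  have hlB : 0 < (1 - l) * B := mul_pos hl1' hBpos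
  have hC : 0 < l * A + (1 - l) * B := by linarith
  have hμν : l * A / (l * A + (1 - l) * B) + (1 - l) * B / (l * A + (1 - l) * B) = 1 := by
    field_simp
  have key : cesS α ρ w ≤ (l * A + (1 - l) * B) ^ ρ := by
    have h := vec_neg hα hρ (div_pos hlA hC) (div_pos hlB hC) hμν
      (a := l • y) (b := (1 - l) • z)
      (fun j hj => by simpa [smul_eq_mul] using mul_pos hl (hy' j hj))
      (fun j hj => by simpa [smul_eq_mul] using mul_pos hl1' (hz' j hj))
    rw [cesS_smul hl.le hy, cesS_smul hl1'.le hz, ← hAρ, ← hBρ,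
      ← Real.mul_rpow hl.le hApos.le, ← Real.mul_rpow hl1'.le hBpos.le] at h
    calc cesS α ρ w ≤ _ := h
      _ = (l * A + (1 - l) * B) ^ ρ := lambda_alg hlA hlB
  calc l * A + (1 - l) * B
      = ((l * A + (1 - l) * B) ^ ρ) ^ (1/ρ) := by
        rw [← Real.rpow_mul hC.le, mul_one_div, div_self hρne, Real.rpow_one]
    _ ≤ (cesS α ρ w) ^ (1/ρ) :=
        Real.rpow_le_rpow_of_nonpos hSw key (by
          rw [one_div]
          exact inv_nonpos.2 hρ.le)

lemma side_zero {m : ℕ} {α : Fin m → ℝ} (hα : ∀ j, 0 ≤ α j) {ρ κ : ℝ} (hρ : ρ < 0)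
    (hκ0 : 0 < κ) (hκ1 : κ ≤ 1) {c : ℝ} (hc : 0 < c) (hc1 : c ≤ 1) {v w : Fin m → ℝ}
    (hv : ∀ j, 0 ≤ v j) (hv' : ∀ j, α j ≠ 0 → 0 < v j)
    (hw : ∀ j, c * v j ≤ w j) (hw0 : ∀ j, 0 ≤ w j)
    {j₀ : Fin m} (hj₀ : α j₀ ≠ 0) :
    c * (cesS α ρ v) ^ (κ/ρ) ≤ (cesS α ρ w) ^ (κ/ρ) := by
  have hρne : ρ ≠ 0 := hρ.ne
  have hSv : 0 < cesS α ρ v := cesS_pos hα hv hj₀ (hv' j₀ hj₀)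
  have hSw : 0 < cesS α ρ w := by
    refine cesS_pos hα hw0 hj₀ (lt_of_lt_of_le (mul_pos hc (hv' j₀ hj₀)) (hw j₀))
  have h1 : cesS α ρ w ≤ c ^ ρ * cesS α ρ v := by
    rw [← cesS_smul hc.le hv]
    refine Finset.sum_le_sum fun j _ => ?_
    by_cases hαj : α j = 0
    · simp [hαj]
    refine mul_le_mul_of_nonneg_left ?_ (hα j)
    have hcv : 0 < c * v j := mul_pos hc (hv' j hαj)
    have := Real.rpow_le_rpow_of_nonpos hcv (hw j) hρ.le
    simpa [Pi.smul_apply, smul_eq_mul] using this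
  have hκρ : κ / ρ ≤ 0 := div_nonpos_of_nonneg_of_nonpos hκ0.le hρ.le
  have h2 : (c ^ ρ * cesS α ρ v) ^ (κ/ρ) ≤ (cesS α ρ w) ^ (κ/ρ) :=
    Real.rpow_le_rpow_of_nonpos hSw h1 hκρ
  have h3 : (c ^ ρ * cesS α ρ v) ^ (κ/ρ) = c ^ κ * (cesS α ρ v) ^ (κ/ρ) := by
    rw [Real.mul_rpow (Real.rpow_nonneg hc.le _) hSv.le, ← Real.rpow_mul hc.le]
    congr 1
    field_simp
  have h4 : c ≤ c ^ κ := by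
    calc c = c ^ (1:ℝ) := (Real.rpow_one c).symm
      _ ≤ c ^ κ := Real.rpow_le_rpow_of_exponent_ge hc hc1 hκ1
  calc c * (cesS α ρ v) ^ (κ/ρ)
      ≤ c ^ κ * (cesS α ρ v) ^ (κ/ρ) :=
        mul_le_mul_of_nonneg_right h4 (Real.rpow_nonneg hSv.le _)
    _ = (c ^ ρ * cesS α ρ v) ^ (κ/ρ) := h3.symm
    _ ≤ (cesS α ρ w) ^ (κ/ρ) := h2

lemma kcomp {κ ρ : ℝ} (hκ0 : 0 < κ) (hκ1 : κ ≤ 1) {Sy Sz Sw l : ℝ}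
    (hSy : 0 ≤ Sy) (hSz : 0 ≤ Sz) (hSw : 0 ≤ Sw) (hl : 0 < l) (hl1 : l < 1)
    (h : l * Sy ^ (1/ρ) + (1 - l) * Sz ^ (1/ρ) ≤ Sw ^ (1/ρ)) :
    l * Sy ^ (κ/ρ) + (1 - l) * Sz ^ (κ/ρ) ≤ Sw ^ (κ/ρ) := by
  have e : ∀ {S : ℝ}, 0 ≤ S → S ^ (κ/ρ) = (S ^ (1/ρ)) ^ κ := by
    intro S hS
    rw [← Real.rpow_mul hS]
    congr 1
    ring
  rw [e hSy, e hSz, e hSw]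
  have hC0 : 0 ≤ l * Sy ^ (1/ρ) + (1 - l) * Sz ^ (1/ρ) :=
    add_nonneg (mul_nonneg hl.le (Real.rpow_nonneg hSy _))
      (mul_nonneg (by linarith) (Real.rpow_nonneg hSz _))
  calc l * (Sy ^ (1/ρ)) ^ κ + (1 - l) * (Sz ^ (1/ρ)) ^ κ
      ≤ (l * Sy ^ (1/ρ) + (1 - l) * Sz ^ (1/ρ)) ^ κ :=
        kstep hκ0 hκ1 (Real.rpow_nonneg hSy _) (Real.rpow_nonneg hSz _) hl.le hl1.le
    _ ≤ (Sw ^ (1/ρ)) ^ κ := Real.rpow_le_rpow hC0 h hκ0.le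


open Classical in
/-- The CES utility function with weights `α`, homogeneity degree `κ` and substitution
parameter `ρ`: on the nonnegative orthant it equals `(∑ j, α j * (y j) ^ ρ) ^ (κ/ρ)` (real
powers), with the convention that for `ρ < 0` the value is `0` whenever some coordinate `y j`
with `α j ≠ 0` vanishes (since then `y j ^ ρ = ∞` and `∞ ^ (κ/ρ) = 0`); outside the
nonnegative orthant the value is `−∞`. -/
noncomputable def uCES {m : ℕ} (α : Fin m → ℝ) (κ ρ : ℝ) (y : Fin m → ℝ) : EReal :=
  if ∀ j, 0 ≤ y j then
    (if ρ < 0 ∧ ∃ j, α j ≠ 0 ∧ y j = 0 then ((0 : ℝ) : EReal)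
      else (((∑ j, α j * (y j) ^ ρ) ^ (κ / ρ) : ℝ) : EReal))
  else ⊥

/-- For weights `α j ≥ 0`, `κ ∈ (0,1]` and `ρ ≤ 1`, `ρ ≠ 0`, the CES utility function is
concave as an extended-real-valued function on `ℝᵐ`. -/
theorem stmt_15 {m : ℕ} (α : Fin m → ℝ) (hα : ∀ j, 0 ≤ α j)
    (κ ρ : ℝ) (hκ0 : 0 < κ) (hκ1 : κ ≤ 1) (hρ1 : ρ ≤ 1) (hρ0 : ρ ≠ 0) :
    ∀ y z : Fin m → ℝ, ∀ l : ℝ, 0 < l → l < 1 →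
      (l : EReal) * uCES α κ ρ y + ((1 - l : ℝ) : EReal) * uCES α κ ρ z
        ≤ uCES α κ ρ (l • y + (1 - l) • z) := by
  intro y z l hl hl1
  have hl1' : (0:ℝ) < 1 - l := by linarith
  by_cases hy : ∀ j, 0 ≤ y j
  case neg =>
    rw [show uCES α κ ρ y = ⊥ from if_neg hy, EReal.coe_mul_bot_of_pos hl, EReal.bot_add]
    exact bot_le
  by_cases hz : ∀ j, 0 ≤ z j
  case neg =>
    rw [show uCES α κ ρ z = ⊥ from if_neg hz, EReal.coe_mul_bot_of_pos hl1', EReal.add_bot]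
    exact bot_le
  set w := l • y + (1 - l) • z with hwdef
  have hwj : ∀ j, w j = l * y j + (1 - l) * z j := fun j => by
    simp [hwdef, Pi.add_apply, Pi.smul_apply, smul_eq_mul]
  have hw0 : ∀ j, 0 ≤ w j := fun j => by
    rw [hwj]
    exact add_nonneg (mul_nonneg hl.le (hy j)) (mul_nonneg hl1'.le (hz j))
  have hSy : (0:ℝ) ≤ cesS α ρ y := cesS_nonneg hα hy
  have hSz : (0:ℝ) ≤ cesS α ρ z := cesS_nonneg hα hz
  have hSw : (0:ℝ) ≤ cesS α ρ w := cesS_nonneg hα hw0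
  rw [show uCES α κ ρ y = if ρ < 0 ∧ ∃ j, α j ≠ 0 ∧ y j = 0 then ((0:ℝ) : EReal)
      else (((cesS α ρ y) ^ (κ/ρ) : ℝ) : EReal) from if_pos hy,
    show uCES α κ ρ z = if ρ < 0 ∧ ∃ j, α j ≠ 0 ∧ z j = 0 then ((0:ℝ) : EReal)
      else (((cesS α ρ z) ^ (κ/ρ) : ℝ) : EReal) from if_pos hz,
    show uCES α κ ρ w = if ρ < 0 ∧ ∃ j, α j ≠ 0 ∧ w j = 0 then ((0:ℝ) : EReal)
      else (((cesS α ρ w) ^ (κ/ρ) : ℝ) : EReal) from if_pos hw0]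
  rcases lt_or_gt_of_ne hρ0 with hρneg | hρpos
  · -- ρ < 0
    by_cases hex : ∃ j, α j ≠ 0
    case neg =>
      push_neg at hex
      have hno : ∀ v : Fin m → ℝ, ¬ (ρ < 0 ∧ ∃ j, α j ≠ 0 ∧ v j = 0) :=
        fun v h => h.2.choose_spec.1 (hex _)
      have hS : ∀ v : Fin m → ℝ, cesS α ρ v = 0 := fun v => by
        unfold cesS; simp [hex]
      rw [if_neg (hno y), if_neg (hno z), if_neg (hno w), hS, hS, hS,
        Real.zero_rpow (div_ne_zero hκ0.ne' hρ0)]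
      norm_num
    obtain ⟨j₀, hj₀⟩ := hex
    by_cases hy0 : ∃ j, α j ≠ 0 ∧ y j = 0 <;> by_cases hz0 : ∃ j, α j ≠ 0 ∧ z j = 0
    · -- both degenerate
      rw [if_pos ⟨hρneg, hy0⟩, if_pos ⟨hρneg, hz0⟩]
      have h0 : (l : EReal) * ((0:ℝ) : EReal) + ((1 - l : ℝ) : EReal) * ((0:ℝ) : EReal)
          = ((0:ℝ) : EReal) := by
        norm_cast
        ring
      rw [h0]
      split_ifs
      · exact le_refl _
      · exact EReal.coe_le_coe_iff.2 (Real.rpow_nonneg hSw _)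
    · -- y degenerate, z not
      push_neg at hz0
      have hz' : ∀ j, α j ≠ 0 → 0 < z j := fun j hj => (hz j).lt_of_ne (Ne.symm (hz0 j hj))
      have hwpos : ∀ j, α j ≠ 0 → 0 < w j := fun j hj => by
        rw [hwj]
        nlinarith [mul_pos hl1' (hz' j hj), mul_nonneg hl.le (hy j)]
      rw [if_pos ⟨hρneg, hy0⟩, if_neg (fun h => (hz' _ h.2.choose_spec.1).ne'
        h.2.choose_spec.2), if_neg (fun h => (hwpos _ h.2.choose_spec.1).ne'
        h.2.choose_spec.2)]
      have hre : (1 - l) * (cesS α ρ z) ^ (κ/ρ) ≤ (cesS α ρ w) ^ (κ/ρ) :=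
        side_zero hα hρneg hκ0 hκ1 hl1' (by linarith) hz hz'
          (fun j => by rw [hwj]; nlinarith [mul_nonneg hl.le (hy j)]) hw0 hj₀
      calc (l : EReal) * ((0:ℝ) : EReal) + ((1 - l : ℝ) : EReal) * (((cesS α ρ z) ^ (κ/ρ) : ℝ) : EReal)
          = (((1 - l) * (cesS α ρ z) ^ (κ/ρ) : ℝ) : EReal) := by
            norm_cast; ring
        _ ≤ (((cesS α ρ w) ^ (κ/ρ) : ℝ) : EReal) := EReal.coe_le_coe_iff.2 hre
    · -- z degenerate, y not
      push_neg at hy0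
      have hy' : ∀ j, α j ≠ 0 → 0 < y j := fun j hj => (hy j).lt_of_ne (Ne.symm (hy0 j hj))
      have hwpos : ∀ j, α j ≠ 0 → 0 < w j := fun j hj => by
        rw [hwj]
        nlinarith [mul_pos hl (hy' j hj), mul_nonneg hl1'.le (hz j)]
      rw [if_neg (fun h => (hy' _ h.2.choose_spec.1).ne' h.2.choose_spec.2),
        if_pos ⟨hρneg, hz0⟩, if_neg (fun h => (hwpos _ h.2.choose_spec.1).ne'
        h.2.choose_spec.2)]
      have hre : l * (cesS α ρ y) ^ (κ/ρ) ≤ (cesS α ρ w) ^ (κ/ρ) :=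
        side_zero hα hρneg hκ0 hκ1 hl hl1.le hy hy'
          (fun j => by rw [hwj]; nlinarith [mul_nonneg hl1'.le (hz j)]) hw0 hj₀
      calc (l : EReal) * (((cesS α ρ y) ^ (κ/ρ) : ℝ) : EReal) + ((1 - l : ℝ) : EReal) * ((0:ℝ) : EReal)
          = ((l * (cesS α ρ y) ^ (κ/ρ) : ℝ) : EReal) := by
            norm_cast; ring
        _ ≤ (((cesS α ρ w) ^ (κ/ρ) : ℝ) : EReal) := EReal.coe_le_coe_iff.2 hre
    · -- neither degenerate
      push_neg at hy0
      push_neg at hz0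
      have hy' : ∀ j, α j ≠ 0 → 0 < y j := fun j hj => (hy j).lt_of_ne (Ne.symm (hy0 j hj))
      have hz' : ∀ j, α j ≠ 0 → 0 < z j := fun j hj => (hz j).lt_of_ne (Ne.symm (hz0 j hj))
      have hwpos : ∀ j, α j ≠ 0 → 0 < w j := fun j hj => by
        rw [hwj]
        nlinarith [mul_pos hl (hy' j hj), mul_nonneg hl1'.le (hz j)]
      rw [if_neg (fun h => (hy' _ h.2.choose_spec.1).ne' h.2.choose_spec.2),
        if_neg (fun h => (hz' _ h.2.choose_spec.1).ne' h.2.choose_spec.2),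
        if_neg (fun h => (hwpos _ h.2.choose_spec.1).ne' h.2.choose_spec.2)]
      have hre := kcomp hκ0 hκ1 hSy hSz hSw hl hl1
        (main_neg hα hρneg hy hz hy' hz' hj₀ hl hl1)
      calc (l : EReal) * (((cesS α ρ y) ^ (κ/ρ) : ℝ) : EReal)
            + ((1 - l : ℝ) : EReal) * (((cesS α ρ z) ^ (κ/ρ) : ℝ) : EReal)
          = ((l * (cesS α ρ y) ^ (κ/ρ) + (1 - l) * (cesS α ρ z) ^ (κ/ρ) : ℝ) : EReal) := by
            norm_cast
        _ ≤ (((cesS α ρ w) ^ (κ/ρ) : ℝ) : EReal) := EReal.coe_le_coe_iff.2 hre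
  · -- 0 < ρ
    have hno : ∀ v : Fin m → ℝ, ¬ (ρ < 0 ∧ ∃ j, α j ≠ 0 ∧ v j = 0) :=
      fun v h => absurd h.1 (not_lt.2 hρpos.le)
    rw [if_neg (hno y), if_neg (hno z), if_neg (hno w)]
    have hre := kcomp hκ0 hκ1 hSy hSz hSw hl hl1
      (main_pos hα hρpos hρ1 hy hz hl hl1)
    calc (l : EReal) * (((cesS α ρ y) ^ (κ/ρ) : ℝ) : EReal)
          + ((1 - l : ℝ) : EReal) * (((cesS α ρ z) ^ (κ/ρ) : ℝ) : EReal)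
        = ((l * (cesS α ρ y) ^ (κ/ρ) + (1 - l) * (cesS α ρ z) ^ (κ/ρ) : ℝ) : EReal) := by
          norm_cast
      _ ≤ (((cesS α ρ w) ^ (κ/ρ) : ℝ) : EReal) := EReal.coe_le_coe_iff.2 hre
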